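/- Let h : ℝ³ → ℝ³ be a homeomorphism and set γ₁ = h(C₁), γ₂ = h(C₂), so that (γ₁, γ₂) forms a Hopf link. Let B = k(B̄(0,1)) for some homeomorphism k : ℝ³ → ℝ³ (a tamely embedded closed topological ball), and suppose γ₁ ∪ γ₂ ⊆ interior(B). Let g : D² → ℝ³ be continuous and injective with g(cos s, sin s) = h(cos s, sin s, 0) for all s ∈ ℝ, and let D = g(D²) (a filling disk of γ₁). Then D ∩ γ₂ ≠ ∅, and the set D ∩ ∂B does not separate γ₁ from γ₂ ∩ D in D; precisely, there exists a connected set S ⊆ D such that S ∩ ∂B = ∅, S ∩ γ₁ ≠ ∅ and S ∩ γ₂ ≠ ∅ (here ∂B denotes the topological frontier of B). -/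

import Mathlib

noncomputable section

/-- ℝ³ with the Euclidean metric. -/
abbrev E3 := EuclideanSpace ℝ (Fin 3)

/-- ℝ² with the Euclidean metric. -/
abbrev E2 := EuclideanSpace ℝ (Fin 2)

/-- The standard round unit circle in the x₁x₂-plane. -/
def C1 : Set E3 := {x | ∃ s : ℝ, x = ![Real.cos s, Real.sin s, 0]}

/-- The standard Hopf partner circle. -/
def C2 : Set E3 := {x | ∃ s : ℝ, x = ![1 + Real.cos s, 0, Real.sin s]}

/-- The closed unit disk `D² ⊆ ℝ²`. -/
def D2 : Set E2 := Metric.closedBall 0 1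

open Complex Metric Set

section Helpers

lemma continuous_into_e2 {α : Type*} [TopologicalSpace α] {v : α → (Fin 2 → ℝ)}
    (hv : Continuous v) : Continuous (fun a => (WithLp.toLp 2 (v a) : E2)) :=
  (PiLp.continuous_toLp 2 (fun _ : Fin 2 => ℝ)).comp hv

lemma continuous_into_e3 {α : Type*} [TopologicalSpace α] {v : α → (Fin 3 → ℝ)}
    (hv : Continuous v) : Continuous (fun a => (WithLp.toLp 2 (v a) : E3)) :=
  (PiLp.continuous_toLp 2 (fun _ : Fin 3 => ℝ)).comp hv

lemma continuous_coord2 (i : Fin 2) : Continuous (fun x : E2 => x i) :=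
  (continuous_apply i).comp (PiLp.continuous_ofLp 2 (fun _ : Fin 2 => ℝ))

lemma continuous_coord3 (i : Fin 3) : Continuous (fun x : E3 => x i) :=
  (continuous_apply i).comp (PiLp.continuous_ofLp 2 (fun _ : Fin 3 => ℝ))

lemma exists_angle {a b : ℝ} (hab : a ^ 2 + b ^ 2 = 1) :
    ∃ s : ℝ, a = Real.cos s ∧ b = Real.sin s := by
  have hz : (⟨a, b⟩ : ℂ) ≠ 0 := by
    intro hzz
    rw [Complex.ext_iff] at hzz
    simp only [Complex.zero_re, Complex.zero_im] at hzz
    rw [hzz.1, hzz.2] at hab; norm_num at hab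
  have habs : ‖(⟨a, b⟩ : ℂ)‖ = 1 := by
    rw [Complex.norm_def, Complex.normSq_mk]
    rw [show a * a + b * b = 1 by nlinarith]
    exact Real.sqrt_one
  refine ⟨Complex.arg ⟨a, b⟩, ?_, ?_⟩
  · rw [Complex.cos_arg hz, habs]; simp
  · rw [Complex.sin_arg, habs]; simp

lemma norm_e2 (y : E2) : ‖y‖ = Real.sqrt (y 0 ^ 2 + y 1 ^ 2) := by
  rw [EuclideanSpace.norm_eq]
  simp [Fin.sum_univ_two, sq_abs]

lemma norm_e3 (y : E3) : ‖y‖ = Real.sqrt (y 0 ^ 2 + y 1 ^ 2 + y 2 ^ 2) := by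
  rw [EuclideanSpace.norm_eq]
  simp [Fin.sum_univ_three, sq_abs]

lemma no_half {p m : ℤ} (h : (p : ℝ) = m + 1 / 2) : False := by
  have h2 : ((2 * p : ℤ) : ℝ) = ((2 * m + 1 : ℤ) : ℝ) := by push_cast; linarith
  have := Int.cast_injective (α := ℝ) h2
  omega

lemma intval_const {α : Type*} [TopologicalSpace α] {s : Set α} (hs : IsPreconnected s)
    {f : α → ℝ} (hf : ContinuousOn f s) (hv : ∀ x ∈ s, ∃ n : ℤ, f x = n)
    {x y : α} (hx : x ∈ s) (hy : y ∈ s) : f x = f y := by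
  have key : ∀ u ∈ s, ∀ v ∈ s, ¬ f u < f v := by
    intro u hu v hv' hlt
    obtain ⟨m, hm⟩ := hv u hu
    obtain ⟨n, hn⟩ := hv v hv'
    have hmn : (m : ℝ) < n := by rw [← hm, ← hn]; exact hlt
    have hmn' : m < n := by exact_mod_cast hmn
    have hmem : (m : ℝ) + 1 / 2 ∈ Icc (f u) (f v) := by
      constructor
      · rw [hm]; linarith
      · rw [hn]
        have : (m : ℝ) + 1 ≤ n := by exact_mod_cast hmn'
        linarith
    have := (hs.image f hf).Icc_subset ⟨u, hu, rfl⟩ ⟨v, hv', rfl⟩ hmem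
    obtain ⟨z, hz, hzeq⟩ := this
    obtain ⟨p, hp⟩ := hv z hz
    exact no_half (by rw [← hzeq, ← hp])
  rcases lt_trichotomy (f x) (f y) with hlt | heq | hgt
  · exact absurd hlt (key x hx y hy)
  · exact heq
  · exact absurd hgt (key y hy x hx)

end Helpers

section Telescope

lemma telescope {S : Set E2} (hS : IsCompact S) {H : E2 × ℝ → ℂ}
    (hH : ContinuousOn H (S ×ˢ Icc (0:ℝ) 1))
    (hne : ∀ p ∈ S ×ˢ Icc (0:ℝ) 1, H p ≠ 0)
    {L1 : E2 → ℂ} (hL1 : ContinuousOn L1 S)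
    (hexp : ∀ x ∈ S, Complex.exp (L1 x) = H (x, 1)) :
    ∃ L0 : E2 → ℂ, ContinuousOn L0 S ∧ ∀ x ∈ S, Complex.exp (L0 x) = H (x, 0) := by
  rcases S.eq_empty_or_nonempty with hSe | hSne
  · exact ⟨L1, hL1, by simp [hSe]⟩
  have hK : IsCompact (S ×ˢ Icc (0:ℝ) 1) := hS.prod isCompact_Icc
  have hKne : (S ×ˢ Icc (0:ℝ) 1).Nonempty := hSne.prod (nonempty_Icc.mpr zero_le_one)
  obtain ⟨p₀, hp₀, hmin'⟩ := hK.exists_isMinOn hKne (continuous_norm.comp_continuousOn hH)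
  have hmin : ∀ p ∈ S ×ˢ Icc (0:ℝ) 1, ‖H p₀‖ ≤ ‖H p‖ :=
    fun p hp => isMinOn_iff.mp hmin' p hp
  set ε := ‖H p₀‖ with hε
  have hεpos : 0 < ε := by
    have h := hne p₀ hp₀
    simpa [hε] using (norm_pos_iff.mpr h)
  obtain ⟨δ, hδpos, hδ⟩ := Metric.uniformContinuousOn_iff.mp
      (hK.uniformContinuousOn_of_continuous hH) ε hεpos
  obtain ⟨n, hn⟩ := exists_nat_gt (1 / δ)
  have hnpos : (0:ℝ) < n := lt_trans (by positivity) hn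
  have hstep : (1:ℝ) / n < δ := by
    rw [div_lt_iff₀ hnpos]
    calc (1:ℝ) = δ * (1/δ) := by field_simp
    _ < δ * n := mul_lt_mul_of_pos_left hn hδpos
  set t : ℕ → ℝ := fun j => 1 - (j:ℝ) / n with ht
  have htmem : ∀ j : ℕ, j ≤ n → t j ∈ Icc (0:ℝ) 1 := by
    intro j hj
    constructor
    · simp only [ht]; rw [sub_nonneg, div_le_one hnpos]; exact_mod_cast hj
    · simp only [ht]
      have : (0:ℝ) ≤ (j:ℝ)/n := by positivity
      linarith
  have hpair : ∀ x ∈ S, ∀ j : ℕ, j ≤ n → (x, t j) ∈ S ×ˢ Icc (0:ℝ) 1 :=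
    fun x hx j hj => ⟨hx, htmem j hj⟩
  have hdist : ∀ x ∈ S, ∀ j : ℕ, j + 1 ≤ n →
      ‖H (x, t (j+1)) - H (x, t j)‖ < ε := by
    intro x hx j hj
    have h1 := hpair x hx (j+1) hj
    have h2 := hpair x hx j (le_trans (Nat.le_succ j) hj)
    have hd : dist ((x, t (j+1)) : E2 × ℝ) (x, t j) < δ := by
      rw [Prod.dist_eq]
      simp only [dist_self]
      rw [max_eq_right dist_nonneg]
      have heq : dist (t (j+1)) (t j) = 1 / n := by
        rw [Real.dist_eq, ht]
        push_cast
        rw [show (1 - ((j:ℝ)+1)/n) - (1 - (j:ℝ)/n) = -(1/n) by field_simp; ring]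
        rw [abs_neg, abs_of_pos (by positivity)]
      rw [heq]; exact hstep
    have := hδ _ h1 _ h2 hd
    rwa [Complex.dist_eq] at this
  have hqslit : ∀ x ∈ S, ∀ j : ℕ, j + 1 ≤ n →
      H (x, t (j+1)) / H (x, t j) ∈ Complex.slitPlane := by
    intro x hx j hj
    have hb := hne _ (hpair x hx j (by omega))
    have hbe := hmin _ (hpair x hx j (by omega))
    have hd := hdist x hx j hj
    rw [Complex.mem_slitPlane_iff]
    left
    have hq1 : ‖H (x, t (j+1)) / H (x, t j) - 1‖ < 1 := by
      rw [show H (x, t (j+1)) / H (x, t j) - 1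
          = (H (x, t (j+1)) - H (x, t j)) / H (x, t j) by field_simp]
      rw [norm_div]
      rw [div_lt_one (lt_of_lt_of_le hεpos hbe)]
      exact lt_of_lt_of_le hd hbe
    have h2 := lt_of_le_of_lt (Complex.abs_re_le_norm _) hq1
    rw [abs_lt] at h2
    have h3 := h2.1
    simp only [Complex.sub_re, Complex.one_re] at h3
    linarith
  have hcomp : ∀ j : ℕ, j ≤ n → ContinuousOn (fun x => H (x, t j)) S := by
    intro j hj
    exact ContinuousOn.comp hH ((continuous_id.prodMk continuous_const).continuousOn)
      (fun x hx => hpair x hx j hj)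
  refine ⟨fun x => L1 x + ∑ j ∈ Finset.range n, Complex.log (H (x, t (j+1)) / H (x, t j)),
    ?_, ?_⟩
  · apply hL1.add
    apply continuousOn_finset_sum
    intro j hjmem
    rw [Finset.mem_range] at hjmem
    have hj1 : j + 1 ≤ n := hjmem
    exact ContinuousOn.clog
      (ContinuousOn.div (hcomp (j+1) hj1) (hcomp j (by omega))
        (fun x hx => hne _ (hpair x hx j (by omega))))
      (fun x hx => hqslit x hx j hj1)
  · intro x hx
    have claim : ∀ m : ℕ, m ≤ n →
        Complex.exp (L1 x + ∑ j ∈ Finset.range m, Complex.log (H (x, t (j+1)) / H (x, t j)))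
          = H (x, t m) := by
      intro m
      induction m with
      | zero =>
        intro _
        have ht0 : t 0 = 1 := by simp [ht]
        simp [hexp x hx, ht0]
      | succ m ih =>
        intro hm
        rw [Finset.sum_range_succ, ← add_assoc, Complex.exp_add, ih (by omega),
          Complex.exp_log (div_ne_zero (hne _ (hpair x hx (m+1) hm))
            (hne _ (hpair x hx m (by omega)))),
          mul_comm, div_mul_cancel₀]
        exact hne _ (hpair x hx m (by omega))
    have htn : t n = 0 := by
      simp only [ht]
      rw [div_self hnpos.ne']
      ring
    have := claim n le_rfl
    rwa [htn] at this

lemma diskLog {F : E2 → ℂ} (hF : ContinuousOn F (closedBall 0 1))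
    (h0 : ∀ x ∈ closedBall (0:E2) 1, F x ≠ 0) :
    ∃ L : E2 → ℂ, ContinuousOn L (closedBall (0:E2) 1) ∧
      ∀ x ∈ closedBall (0:E2) 1, Complex.exp (L x) = F x := by
  have hmaps : ∀ p : E2 × ℝ, p ∈ (closedBall (0:E2) 1) ×ˢ Icc (0:ℝ) 1 →
      (1 - p.2) • p.1 ∈ closedBall (0:E2) 1 := by
    rintro ⟨x, u⟩ ⟨hx, hu⟩
    simp only [mem_closedBall, dist_zero_right] at hx ⊢
    rw [norm_smul]
    have h1 : ‖(1:ℝ) - u‖ ≤ 1 := by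
      rw [Real.norm_eq_abs, abs_le]
      exact ⟨by linarith [hu.2], by linarith [hu.1]⟩
    calc ‖(1:ℝ)-u‖ * ‖x‖ ≤ 1 * 1 := mul_le_mul h1 hx (norm_nonneg _) zero_le_one
    _ = 1 := by ring
  have hcont : ContinuousOn (fun p : E2 × ℝ => F ((1 - p.2) • p.1))
      ((closedBall (0:E2) 1) ×ˢ Icc (0:ℝ) 1) := by
    apply ContinuousOn.comp hF
      ((Continuous.smul (continuous_const.sub continuous_snd) continuous_fst).continuousOn)
    exact hmaps
  obtain ⟨L0, hc, he⟩ := telescope (isCompact_closedBall _ _) hcont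
      (fun p hp => h0 _ (hmaps p hp)) (L1 := fun _ => Complex.log (F 0))
      continuousOn_const (by
        intro x hx
        simp only [sub_self, zero_smul]
        rw [Complex.exp_log (h0 0 (mem_closedBall_self zero_le_one))])
  exact ⟨L0, hc, fun x hx => by simpa using he x hx⟩

end Telescope

section Winding

lemma bd_mem (s : ℝ) : (WithLp.toLp 2 ![Real.cos s, Real.sin s] : E2) ∈ closedBall (0:E2) 1 := by
  apply mem_closedBall_zero_iff.mpr
  rw [norm_e2 (WithLp.toLp 2 ![Real.cos s, Real.sin s] : E2)]
  simp only [PiLp.toLp_apply, Matrix.cons_val_zero, Matrix.cons_val_one, Matrix.head_cons]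
  rw [Real.cos_sq_add_sin_sq, Real.sqrt_one]

lemma noWind {F : E2 → ℂ} (hF : ContinuousOn F (closedBall 0 1))
    (h0 : ∀ x ∈ closedBall (0:E2) 1, F x ≠ 0)
    (hbd : ∀ s : ℝ, F (WithLp.toLp 2 ![Real.cos s, Real.sin s])
      = Complex.exp (((Real.pi : ℂ) - (s : ℂ)) * Complex.I)) : False := by
  obtain ⟨L, hLc, hLe⟩ := diskLog hF h0
  set u : ℝ → E2 := fun s => WithLp.toLp 2 ![Real.cos s, Real.sin s] with hu
  have humem : ∀ s, u s ∈ closedBall (0:E2) 1 := bd_mem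
  have hucont : Continuous u := by
    apply continuous_into_e2
    apply continuous_pi
    intro i
    fin_cases i
    · simpa using Real.continuous_cos
    · simpa using Real.continuous_sin
  have hLu : Continuous fun s => L (u s) :=
    continuousOn_univ.mp
      ((hLc.comp hucont.continuousOn) (fun s _ => humem s))
  set ψ : ℝ → ℝ := fun s =>
    ((L (u s) - ((Real.pi : ℂ) - (s : ℂ)) * Complex.I) / (2 * (Real.pi : ℂ) * Complex.I)).re
    with hψ
  have hψc : Continuous ψ := by
    apply Complex.continuous_re.comp
    apply Continuous.div_const
    exact hLu.sub ((continuous_const.sub Complex.continuous_ofReal).mul continuous_const)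
  have h2πI : (2 * (Real.pi : ℂ) * Complex.I) ≠ 0 := by
    simp [Real.pi_ne_zero, Complex.I_ne_zero]
  have hψval : ∀ s : ℝ, ∃ n : ℤ, ψ s = n := by
    intro s
    have h1 : Complex.exp (L (u s)) = Complex.exp (((Real.pi : ℂ) - (s : ℂ)) * Complex.I) := by
      rw [hLe _ (humem s)]; exact hbd s
    rw [Complex.exp_eq_exp_iff_exists_int] at h1
    obtain ⟨n, hn⟩ := h1
    refine ⟨n, ?_⟩
    rw [hψ]
    simp only []
    rw [hn, show ((Real.pi : ℂ) - (s : ℂ)) * Complex.I + (n : ℂ) * (2 * (Real.pi : ℂ) * Complex.I)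
        - ((Real.pi : ℂ) - (s : ℂ)) * Complex.I = (n : ℂ) * (2 * (Real.pi : ℂ) * Complex.I) by ring,
      mul_div_cancel_right₀ _ h2πI]
    simp
  have huu : u (2 * Real.pi) = u 0 := by
    rw [hu]
    simp [Real.cos_two_pi, Real.sin_two_pi]
  have hdiff : ψ (2 * Real.pi) = ψ 0 + 1 := by
    have hcalc : (L (u 0) - ((Real.pi : ℂ) - ((2 * Real.pi : ℝ) : ℂ)) * Complex.I)
          / (2 * (Real.pi : ℂ) * Complex.I)
        = (L (u 0) - ((Real.pi : ℂ) - ((0 : ℝ) : ℂ)) * Complex.I)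
          / (2 * (Real.pi : ℂ) * Complex.I) + 1 := by
      rw [div_add' _ _ _ h2πI]
      congr 1
      push_cast
      ring
    rw [hψ]
    simp only []
    rw [huu, hcalc]
    simp [Complex.add_re]
  have hmem : ψ 0 + 1/2 ∈ Icc (ψ 0) (ψ (2 * Real.pi)) := by
    rw [hdiff]
    constructor <;> linarith
  obtain ⟨s₀, _, hs₀⟩ := intermediate_value_Icc (by positivity) hψc.continuousOn hmem
  obtain ⟨n, hn⟩ := hψval s₀
  obtain ⟨m, hm⟩ := hψval 0
  exact no_half (p := n) (m := m) (by rw [← hn, hs₀, hm])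

end Winding

section SphereLog

lemma sphere_sq_sum {y : E3} (hy : y ∈ sphere (0:E3) 1) :
    y 0 ^ 2 + y 1 ^ 2 + y 2 ^ 2 = 1 := by
  have h := mem_sphere_zero_iff_norm.mp hy
  rw [norm_e3] at h
  exact Real.sqrt_eq_one.mp h

lemma sphereLog {G : E3 → ℂ} (hG : ContinuousOn G (sphere (0:E3) 1))
    (h0 : ∀ y ∈ sphere (0:E3) 1, G y ≠ 0) :
    ∃ M : E3 → ℂ, ContinuousOn M (sphere (0:E3) 1) ∧
      ∀ y ∈ sphere (0:E3) 1, Complex.exp (M y) = G y := by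
  classical
  set η : ℝ → E2 → E3 :=
    fun σ y => (WithLp.toLp 2 ![y 0, y 1, σ * Real.sqrt (1 - (y 0 ^ 2 + y 1 ^ 2))] : E3) with hη
  have hsum_le : ∀ y : E2, y ∈ closedBall (0:E2) 1 → y 0 ^ 2 + y 1 ^ 2 ≤ 1 := by
    intro y hy
    have h := mem_closedBall_zero_iff.mp hy
    rw [norm_e2] at h
    exact Real.sqrt_le_one.mp h
  have hηmem : ∀ σ : ℝ, σ = 1 ∨ σ = -1 → ∀ y ∈ closedBall (0:E2) 1,
      η σ y ∈ sphere (0:E3) 1 := by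
    intro σ hσ y hy
    apply mem_sphere_zero_iff_norm.mpr
    rw [norm_e3, hη]
    simp only [PiLp.toLp_apply, Matrix.cons_val_zero, Matrix.cons_val_one, Matrix.head_cons,
      Matrix.cons_val_two, Matrix.tail_cons]
    have h1 : (0:ℝ) ≤ 1 - (y 0 ^ 2 + y 1 ^ 2) := by linarith [hsum_le y hy]
    have hσ2 : σ ^ 2 = 1 := by rcases hσ with h | h <;> rw [h] <;> norm_num
    rw [mul_pow, hσ2, one_mul, Real.sq_sqrt h1]
    rw [show y 0 ^ 2 + y 1 ^ 2 + (1 - (y 0 ^ 2 + y 1 ^ 2)) = 1 by ring, Real.sqrt_one]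
  have hηcont : ∀ σ : ℝ, Continuous (η σ) := by
    intro σ
    apply continuous_into_e3
    apply continuous_pi
    intro i
    fin_cases i
    · simpa using continuous_coord2 0
    · simpa using continuous_coord2 1
    · simp only [Matrix.cons_val_two, Matrix.tail_cons, Matrix.head_cons]
      exact continuous_const.mul (Real.continuous_sqrt.comp
        (continuous_const.sub (((continuous_coord2 0).pow 2).add ((continuous_coord2 1).pow 2))))
  have hGη : ∀ σ : ℝ, σ = 1 ∨ σ = -1 → ContinuousOn (fun y => G (η σ y)) (closedBall (0:E2) 1) :=
    fun σ hσ => hG.comp (hηcont σ).continuousOn (fun y hy => hηmem σ hσ y hy)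
  obtain ⟨Lp, hLpc, hLpe⟩ := diskLog (hGη 1 (Or.inl rfl))
    (fun y hy => h0 _ (hηmem 1 (Or.inl rfl) y hy))
  obtain ⟨Lm, hLmc, hLme⟩ := diskLog (hGη (-1) (Or.inr rfl))
    (fun y hy => h0 _ (hηmem (-1) (Or.inr rfl) y hy))
  set proj : E3 → E2 := fun x => (WithLp.toLp 2 ![x 0, x 1] : E2) with hproj
  have hprojcont : Continuous proj := by
    apply continuous_into_e2
    apply continuous_pi
    intro i
    fin_cases i
    · simpa using continuous_coord3 0
    · simpa using continuous_coord3 1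
  have hprojmem : ∀ x ∈ sphere (0:E3) 1, proj x ∈ closedBall (0:E2) 1 := by
    intro x hx
    apply mem_closedBall_zero_iff.mpr
    rw [norm_e2, hproj]
    simp only [PiLp.toLp_apply, Matrix.cons_val_zero, Matrix.cons_val_one, Matrix.head_cons]
    apply Real.sqrt_le_one.mpr
    nlinarith [sphere_sq_sum hx, sq_nonneg (x 2)]
  have hkey : ∀ σ : ℝ, σ = 1 ∨ σ = -1 → ∀ x ∈ sphere (0:E3) 1, 0 ≤ σ * x 2 →
      η σ (proj x) = x := by
    intro σ hσ x hx hsx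
    ext i
    fin_cases i
    · simp [hη, hproj]
    · simp [hη, hproj]
    · show (WithLp.toLp 2 ![(proj x) 0, (proj x) 1, σ * Real.sqrt (1 - ((proj x) 0 ^ 2 + (proj x) 1 ^ 2))]
        : E3) 2 = x 2
      simp only [hproj, PiLp.toLp_apply, Matrix.cons_val_two, Matrix.tail_cons, Matrix.head_cons,
        Matrix.cons_val_zero, Matrix.cons_val_one]
      have h1 : 1 - (x 0 ^ 2 + x 1 ^ 2) = x 2 ^ 2 := by linarith [sphere_sq_sum hx]
      rw [h1, Real.sqrt_sq_eq_abs]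
      rcases hσ with h | h <;> rw [h] at hsx ⊢
      · rw [one_mul]
        exact abs_of_nonneg (by linarith)
      · have : x 2 ≤ 0 := by linarith
        rw [abs_of_nonpos this]
        ring
  set Eq : Set E3 := sphere (0:E3) 1 ∩ {x : E3 | x 2 = 0} with hEq
  have hEqconn : IsPreconnected Eq := by
    have himg : Eq = (fun s : ℝ => (WithLp.toLp 2 ![Real.cos s, Real.sin s, 0] : E3)) '' univ := by
      apply Subset.antisymm
      · rintro x ⟨hx1, hx2⟩
        have h1 : x 0 ^ 2 + x 1 ^ 2 = 1 := by
          have h3 := sphere_sq_sum hx1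
          have h2 : x 2 = 0 := hx2
          nlinarith [h3]
        obtain ⟨s, hc, hs⟩ := exists_angle h1
        refine ⟨s, trivial, ?_⟩
        ext i
        fin_cases i
        · simp [← hc]
        · simp [← hs]
        · simpa using hx2.symm
      · rintro x ⟨s, -, rfl⟩
        constructor
        · apply mem_sphere_zero_iff_norm.mpr
          rw [norm_e3]
          simp only [PiLp.toLp_apply, Matrix.cons_val_zero, Matrix.cons_val_one, Matrix.head_cons,
            Matrix.cons_val_two, Matrix.tail_cons]
          rw [show Real.cos s ^ 2 + Real.sin s ^ 2 + 0 ^ 2 = 1 by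
            rw [Real.cos_sq_add_sin_sq]; ring, Real.sqrt_one]
        · show (WithLp.toLp 2 ![Real.cos s, Real.sin s, 0] : E3) 2 = 0
          simp
    rw [himg]
    apply IsPreconnected.image isPreconnected_univ
    apply Continuous.continuousOn
    apply continuous_into_e3
    apply continuous_pi
    intro i
    fin_cases i
    · simpa using Real.continuous_cos
    · simpa using Real.continuous_sin
    · simpa using continuous_const
  have h2πI : (2 * (Real.pi : ℂ) * Complex.I) ≠ 0 := by
    simp [Real.pi_ne_zero, Complex.I_ne_zero]
  have hjump : ∀ x ∈ Eq, ∃ n : ℤ,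
      Lp (proj x) - Lm (proj x) = n * (2 * (Real.pi:ℂ) * Complex.I) := by
    intro x hx
    have hx1 : x ∈ sphere (0:E3) 1 := hx.1
    have hx2 : x 2 = 0 := hx.2
    have hp := hLpe (proj x) (hprojmem x hx1)
    have hm := hLme (proj x) (hprojmem x hx1)
    rw [hkey 1 (Or.inl rfl) x hx1 (by rw [hx2]; ring_nf; exact le_refl 0)] at hp
    rw [hkey (-1) (Or.inr rfl) x hx1 (by rw [hx2]; ring_nf; exact le_refl 0)] at hm
    have hpm : Complex.exp (Lp (proj x)) = Complex.exp (Lm (proj x)) := by rw [hp, hm]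
    rw [Complex.exp_eq_exp_iff_exists_int] at hpm
    obtain ⟨n, hn⟩ := hpm
    exact ⟨n, by rw [hn]; ring⟩
  have he₀ : (WithLp.toLp 2 ![1, 0, 0] : E3) ∈ Eq := by
    constructor
    · apply mem_sphere_zero_iff_norm.mpr
      rw [norm_e3]
      norm_num
      rfl
    · show (WithLp.toLp 2 ![(1:ℝ), 0, 0] : E3) 2 = 0
      simp
  set e₀ : E3 := (WithLp.toLp 2 ![1, 0, 0] : E3) with he₀def
  set c : ℂ := Lp (proj e₀) - Lm (proj e₀) with hc
  obtain ⟨m₀, hm₀⟩ := hjump e₀ he₀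
  have hLppr : ContinuousOn (fun x : E3 => Lp (proj x)) (sphere (0:E3) 1) :=
    hLpc.comp hprojcont.continuousOn hprojmem
  have hLmpr : ContinuousOn (fun x : E3 => Lm (proj x)) (sphere (0:E3) 1) :=
    hLmc.comp hprojcont.continuousOn hprojmem
  have hconst : ∀ x ∈ Eq, Lp (proj x) - Lm (proj x) = c := by
    intro x hx
    obtain ⟨n, hn⟩ := hjump x hx
    have hre := intval_const hEqconn
      (f := fun x => ((Lp (proj x) - Lm (proj x)) / (2 * (Real.pi:ℂ) * Complex.I)).re)
      (by
        apply Complex.continuous_re.comp_continuousOn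
        apply ContinuousOn.div_const
        exact (hLppr.sub hLmpr).mono (inter_subset_left))
      (by
        intro z hz
        obtain ⟨p, hp⟩ := hjump z hz
        refine ⟨p, ?_⟩
        show ((Lp (proj z) - Lm (proj z)) / (2 * (Real.pi:ℂ) * Complex.I)).re = (p:ℝ)
        rw [hp, mul_div_cancel_right₀ _ h2πI]
        simp)
      hx he₀
    have hre2 : ((Lp (proj x) - Lm (proj x)) / (2 * (Real.pi:ℂ) * Complex.I)).re
        = ((Lp (proj e₀) - Lm (proj e₀)) / (2 * (Real.pi:ℂ) * Complex.I)).re := hre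
    rw [hn, hm₀, mul_div_cancel_right₀ _ h2πI, mul_div_cancel_right₀ _ h2πI] at hre2
    simp only [Complex.intCast_re] at hre2
    have hnm : n = m₀ := by exact_mod_cast hre2
    rw [hc, hn, hm₀, hnm]
  refine ⟨fun x => if 0 ≤ x 2 then Lp (proj x) else Lm (proj x) + c, ?_, ?_⟩
  · apply ContinuousOn.if
    · intro a ha
      have hfr : a 2 = 0 := by
        have h2 := ha.2
        rw [frontier_eq_closure_inter_closure] at h2
        have hcl : closure {a : E3 | 0 ≤ a 2} ⊆ {a : E3 | 0 ≤ a 2} :=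
          (isClosed_le continuous_const (continuous_coord3 2)).closure_subset_iff.mpr
            (subset_refl _)
        have hcl2 : closure {a : E3 | 0 ≤ a 2}ᶜ ⊆ {a : E3 | a 2 ≤ 0} := by
          apply closure_minimal
          · intro z hz
            simp only [mem_compl_iff, mem_setOf_eq, not_le] at hz
            exact le_of_lt hz
          · exact isClosed_le (continuous_coord3 2) continuous_const
        exact le_antisymm (hcl2 h2.2) (hcl h2.1)
      have := hconst a ⟨ha.1, hfr⟩
      linear_combination this
    · exact hLppr.mono (fun x hx => hx.1)
    · exact (hLmpr.add continuousOn_const).mono (fun x hx => hx.1)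
  · intro y hy
    by_cases hcase : 0 ≤ y 2
    · simp only [hcase, if_true]
      rw [hLpe (proj y) (hprojmem y hy), hkey 1 (Or.inl rfl) y hy (by linarith)]
    · simp only [hcase, if_false]
      rw [Complex.exp_add, hLme (proj y) (hprojmem y hy),
        hkey (-1) (Or.inr rfl) y hy (by push_neg at hcase; nlinarith)]
      rw [hc, hm₀, Complex.exp_int_mul_two_pi_mul_I, mul_one]

end SphereLog

section Zeta

def zeta : E3 → ℂ := fun y =>
  ((Real.sqrt ((y 0 - 1) ^ 2 + y 2 ^ 2) - 1 : ℝ) : ℂ) + (y 1 : ℝ) * Complex.I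

lemma zeta_cont : Continuous zeta := by
  apply Continuous.add
  · apply Complex.continuous_ofReal.comp
    apply Continuous.sub _ continuous_const
    apply Real.continuous_sqrt.comp
    exact (((continuous_coord3 0).sub continuous_const).pow 2).add ((continuous_coord3 2).pow 2)
  · exact (Complex.continuous_ofReal.comp (continuous_coord3 1)).mul continuous_const

lemma zeta_zero_iff (y : E3) : zeta y = 0 ↔ y ∈ C2 := by
  constructor
  · intro h
    rw [Complex.ext_iff] at h
    simp only [zeta, Complex.add_re, Complex.ofReal_re, Complex.add_im, Complex.ofReal_im,
      Complex.mul_re, Complex.mul_im, Complex.I_re, Complex.I_im, Complex.zero_re,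
      Complex.zero_im, mul_zero, mul_one, zero_sub, zero_add, sub_zero, zero_mul] at h
    obtain ⟨h1, h2⟩ := h
    have h2' : y 1 = 0 := by linarith [h1, h2]
    have hsq : (y 0 - 1) ^ 2 + y 2 ^ 2 = 1 := Real.sqrt_eq_one.mp (by linarith)
    obtain ⟨s, hc, hs⟩ := exists_angle hsq
    refine ⟨s, ?_⟩
    funext i
    fin_cases i
    · show y 0 = (![1 + Real.cos s, 0, Real.sin s] : Fin 3 → ℝ) 0
      simp only [PiLp.toLp_apply, Matrix.cons_val_zero]
      linarith
    · show y 1 = (![1 + Real.cos s, 0, Real.sin s] : Fin 3 → ℝ) 1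
      simp only [Matrix.cons_val_one, Matrix.head_cons]
      exact h2'
    · show y 2 = (![1 + Real.cos s, 0, Real.sin s] : Fin 3 → ℝ) 2
      simp only [Matrix.cons_val_two, Matrix.tail_cons, Matrix.head_cons]
      exact hs
  · rintro ⟨s, hs⟩
    simp only [zeta, hs, Matrix.cons_val_zero, Matrix.cons_val_one, Matrix.head_cons,
      Matrix.cons_val_two, Matrix.tail_cons]
    rw [show (1 : ℝ) + Real.cos s - 1 = Real.cos s by ring, Real.cos_sq_add_sin_sq,
      Real.sqrt_one]
    simp

lemma zeta_boundary (s : ℝ) : zeta (WithLp.toLp 2 ![Real.cos s, Real.sin s, 0] : E3)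
    = Complex.exp (((Real.pi : ℂ) - (s : ℂ)) * Complex.I) := by
  have hre : ((Real.pi : ℂ) - (s : ℂ)) = ((Real.pi - s : ℝ) : ℂ) := by push_cast; ring
  rw [hre, Complex.exp_mul_I, ← Complex.ofReal_cos, ← Complex.ofReal_sin,
    Real.cos_pi_sub, Real.sin_pi_sub]
  simp only [zeta, Matrix.cons_val_zero, Matrix.cons_val_one, Matrix.head_cons,
    Matrix.cons_val_two, Matrix.tail_cons]
  rw [show (0:ℝ) ^ 2 = 0 by ring, add_zero, Real.sqrt_sq_eq_abs,
    abs_of_nonpos (by linarith [Real.cos_le_one s] : Real.cos s - 1 ≤ 0)]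
  push_cast
  ring

end Zeta

set_option maxHeartbeats 2000000 in
/-- If a Hopf link `(γ₁, γ₂)` lies in the interior of a tamely embedded closed ball `B`,
and `D` is a filling disk of `γ₁`, then `D` meets `γ₂` and `D ∩ ∂B` cannot separate
`γ₁` from `γ₂ ∩ D` inside `D`. -/
theorem filling_disk_not_separated
    (h : E3 ≃ₜ E3) (γ₁ γ₂ : Set E3) (hγ₁ : γ₁ = h '' C1) (hγ₂ : γ₂ = h '' C2)
    (k : E3 ≃ₜ E3) (B : Set E3) (hB : B = k '' Metric.closedBall 0 1)
    (hint : γ₁ ∪ γ₂ ⊆ interior B)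
    (g : E2 → E3) (hg : ContinuousOn g D2) (hinj : Set.InjOn g D2)
    (hbd : ∀ s : ℝ, g (WithLp.toLp 2 ![Real.cos s, Real.sin s]) = h (WithLp.toLp 2 ![Real.cos s, Real.sin s, 0])) :
    (g '' D2 ∩ γ₂).Nonempty ∧
      ∃ S ⊆ g '' D2, IsConnected S ∧ S ∩ frontier B = ∅ ∧
        (S ∩ γ₁).Nonempty ∧ (S ∩ γ₂).Nonempty := by
  classical
  have hD2 : D2 = closedBall (0:E2) 1 := rfl
  -- the radial retraction of the plane onto the disk
  set r : E2 → E2 := fun x => (max 1 ‖x‖)⁻¹ • x with hr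
  have hrpos : ∀ x : E2, (0:ℝ) < max 1 ‖x‖ := fun x => lt_of_lt_of_le one_pos (le_max_left _ _)
  have hrcont : Continuous r := by
    apply Continuous.fun_smul _ continuous_id
    exact (continuous_const.max continuous_norm).inv₀ (fun x => (hrpos x).ne')
  have hrmem : ∀ x : E2, r x ∈ D2 := by
    intro x
    rw [hD2]
    apply mem_closedBall_zero_iff.mpr
    rw [hr]
    simp only []
    rw [norm_smul, norm_inv, Real.norm_eq_abs, abs_of_pos (hrpos x)]
    calc (max 1 ‖x‖)⁻¹ * ‖x‖ ≤ (max 1 ‖x‖)⁻¹ * (max 1 ‖x‖) :=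
      mul_le_mul_of_nonneg_left (le_max_right _ _) (inv_nonneg.mpr (hrpos x).le)
    _ = 1 := inv_mul_cancel₀ (hrpos x).ne'
  have hrid : ∀ x ∈ D2, r x = x := by
    intro x hx
    rw [hD2] at hx
    have hmax : max 1 ‖x‖ = 1 := max_eq_left (mem_closedBall_zero_iff.mp hx)
    rw [hr]
    simp [hmax]
  have hrunit : ∀ x : E2, 1 ≤ ‖x‖ → ‖r x‖ = 1 := by
    intro x hx
    have hmax : max 1 ‖x‖ = ‖x‖ := max_eq_right hx
    rw [hr]
    simp only []
    rw [norm_smul, norm_inv, Real.norm_eq_abs, abs_of_pos (hrpos x), hmax]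
    exact inv_mul_cancel₀ (by linarith)
  set gb : E2 → E3 := fun x => g (r x) with hgb
  have hgbcont : Continuous gb := hg.comp_continuous hrcont hrmem
  have hgbD2 : ∀ x : E2, gb x ∈ g '' D2 := fun x => ⟨r x, hrmem x, rfl⟩
  have hgbid : ∀ x ∈ D2, gb x = g x := fun x hx => by rw [hgb]; simp [hrid x hx]
  -- circle points map into γ₁
  have hcirc : ∀ z : E2, ‖z‖ = 1 → g z ∈ γ₁ := by
    intro z hz
    have hz2 : z 0 ^ 2 + z 1 ^ 2 = 1 := by
      have h1 := norm_e2 z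
      rw [hz] at h1
      exact Real.sqrt_eq_one.mp h1.symm
    obtain ⟨s, hc, hs⟩ := exists_angle hz2
    have hzeq : z = (WithLp.toLp 2 ![Real.cos s, Real.sin s] : E2) := by
      ext i
      fin_cases i
      · simpa using hc
      · simpa using hs
    rw [hzeq, hbd s, hγ₁]
    exact ⟨_, ⟨s, rfl⟩, rfl⟩
  have hγ₁int : γ₁ ⊆ interior B := fun y hy => hint (Or.inl hy)
  have hγ₂int : γ₂ ⊆ interior B := fun y hy => hint (Or.inr hy)
  -- γ₁ and γ₂ are disjoint
  have hdisj : ∀ y, y ∈ γ₁ → y ∉ γ₂ := by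
    intro y h1 h2
    rw [hγ₁] at h1
    rw [hγ₂] at h2
    obtain ⟨a, ha, hay⟩ := h1
    obtain ⟨b, hb, hby⟩ := h2
    have hab : a = b := h.injective (by rw [hay, hby])
    obtain ⟨s, hs⟩ := ha
    obtain ⟨t, ht⟩ := hb
    replace hab := hs.symm.trans ((congrArg WithLp.ofLp hab).trans ht)
    have h0 : Real.cos s = 1 + Real.cos t := by
      have := congrFun hab 0
      simpa using this
    have h1' : Real.sin s = 0 := by
      have := congrFun hab 1
      simpa using this
    have h2' : Real.sin t = 0 := by
      have := congrFun hab 2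
      simpa using this.symm
    have hcs : Real.cos s ^ 2 = 1 := by
      have := Real.sin_sq_add_cos_sq s
      rw [h1'] at this
      nlinarith
    have hct : Real.cos t ^ 2 = 1 := by
      have := Real.sin_sq_add_cos_sq t
      rw [h2'] at this
      nlinarith
    have h5 : (1 + Real.cos t) ^ 2 = 1 := by rw [← h0]; exact hcs
    nlinarith [h5, hct, sq_nonneg (2 * Real.cos t + 1)]
  -- nonvanishing of zeta ∘ h.symm off γ₂
  have hzne : ∀ y : E3, y ∉ γ₂ → zeta (h.symm y) ≠ 0 := by
    intro y hy hz
    rw [zeta_zero_iff] at hz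
    exact hy (hγ₂ ▸ ⟨h.symm y, hz, h.apply_symm_apply y⟩)
  -- interior of B
  have hintB : interior B = k '' ball 0 1 := by
    rw [hB, ← Homeomorph.image_interior, interior_closedBall _ one_ne_zero]
  have hnotint : ∀ y : E3, y ∉ interior B → 1 ≤ ‖k.symm y‖ := by
    intro y hy
    by_contra hc
    push_neg at hc
    exact hy (hintB ▸ ⟨k.symm y, mem_ball_zero_iff.mpr hc, k.apply_symm_apply y⟩)
  have hnotint' : ∀ q : E3, 1 ≤ ‖q‖ → k q ∉ interior B := by
    intro q hq hmem
    rw [hintB] at hmem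
    obtain ⟨w, hw, hweq⟩ := hmem
    have : w = q := k.injective hweq
    rw [this] at hw
    have := mem_ball_zero_iff.mp hw
    linarith
  -- the test function F
  set F : E2 → ℂ := fun x => zeta (h.symm (gb x)) with hF
  have hFcont : Continuous F := zeta_cont.comp (h.symm.continuous.comp hgbcont)
  have hFzero : ∀ x : E2, F x = 0 → gb x ∈ γ₂ := by
    intro x hx
    by_contra hne
    exact hzne _ hne hx
  have hFbd : ∀ s : ℝ, F (WithLp.toLp 2 ![Real.cos s, Real.sin s] : E2)
      = Complex.exp (((Real.pi : ℂ) - (s : ℂ)) * Complex.I) := by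
    intro s
    show zeta (h.symm (gb (WithLp.toLp 2 ![Real.cos s, Real.sin s] : E2))) = _
    rw [hgbid _ (hD2 ▸ bd_mem s), hbd s, h.symm_apply_apply, zeta_boundary]
  -- PART 1
  have part1 : (g '' D2 ∩ γ₂).Nonempty := by
    by_contra hcon
    rw [not_nonempty_iff_eq_empty] at hcon
    apply noWind hFcont.continuousOn ?_ hFbd
    intro x _ hzero
    have hmem : gb x ∈ g '' D2 ∩ γ₂ := ⟨hgbD2 x, hFzero x hzero⟩
    rw [hcon] at hmem
    exact hmem
  refine ⟨part1, ?_⟩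
  -- setup for part 2
  obtain ⟨y₀, hy₀D, hy₀γ⟩ := part1
  set W : Set E2 := gb ⁻¹' (interior B) with hW
  have hWopen : IsOpen W := isOpen_interior.preimage hgbcont
  set p₀ : E2 := (WithLp.toLp 2 ![1, 0] : E2) with hp₀
  have hp₀norm : ‖p₀‖ = 1 := by
    rw [norm_e2, hp₀]
    simp only [PiLp.toLp_apply, Matrix.cons_val_zero, Matrix.cons_val_one, Matrix.head_cons]
    norm_num
  have hp₀D2 : p₀ ∈ D2 := by
    rw [hD2]
    exact mem_closedBall_zero_iff.mpr (le_of_eq hp₀norm)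
  have hp₀W : p₀ ∈ W := by
    show gb p₀ ∈ interior B
    rw [hgbid p₀ hp₀D2]
    exact hγ₁int (hcirc p₀ hp₀norm)
  set U : Set E2 := connectedComponentIn W p₀ with hU
  have hUopen : IsOpen U := hWopen.connectedComponentIn
  have hUW : U ⊆ W := connectedComponentIn_subset _ _
  have hUconn : IsConnected U := isConnected_connectedComponentIn_iff.mpr hp₀W
  -- the outer region lies in U
  have houterconn : IsPreconnected {x : E2 | 1 ≤ ‖x‖} := by
    have himg : {x : E2 | 1 ≤ ‖x‖} = (fun p : ℝ × E2 => p.1 • p.2) '' (Ici 1 ×ˢ sphere 0 1) := by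
      apply Subset.antisymm
      · intro x hx
        have hx1 : (1:ℝ) ≤ ‖x‖ := hx
        have hxne : ‖x‖ ≠ 0 := by linarith
        refine ⟨(‖x‖, ‖x‖⁻¹ • x), ⟨hx1, ?_⟩, ?_⟩
        · apply mem_sphere_zero_iff_norm.mpr
          rw [norm_smul, norm_inv, Real.norm_eq_abs, abs_of_pos (by linarith)]
          exact inv_mul_cancel₀ hxne
        · show ‖x‖ • (‖x‖⁻¹ • x) = x
          rw [smul_smul, mul_inv_cancel₀ hxne, one_smul]
      · rintro y ⟨⟨t, z⟩, ⟨ht, hz⟩, rfl⟩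
        show (1:ℝ) ≤ ‖t • z‖
        rw [norm_smul, Real.norm_eq_abs, abs_of_pos (by exact lt_of_lt_of_le one_pos ht),
          mem_sphere_zero_iff_norm.mp hz, mul_one]
        exact ht
    rw [himg]
    apply IsPreconnected.image
    · have hrank : 1 < Module.rank ℝ E2 := by
        rw [← Module.finrank_eq_rank, finrank_euclideanSpace_fin]
        norm_num
      exact (isConnected_Ici.prod (isConnected_sphere hrank 0 zero_le_one)).isPreconnected
    · exact (continuous_fst.smul continuous_snd).continuousOn
  have houter : {x : E2 | 1 ≤ ‖x‖} ⊆ U := by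
    have hsubW : {x : E2 | 1 ≤ ‖x‖} ⊆ W := by
      intro x hx
      show gb x ∈ interior B
      exact hγ₁int (hcirc _ (hrunit x hx))
    exact houterconn.subset_connectedComponentIn (le_of_eq hp₀norm.symm) hsubW
  -- preimage of γ₂
  set Z : Set E2 := gb ⁻¹' γ₂ with hZ
  have hZW : Z ⊆ W := fun x hx => hγ₂int hx
  have hZne : Z.Nonempty := by
    obtain ⟨w, hwD, hwg⟩ := hy₀D
    refine ⟨w, ?_⟩
    show gb w ∈ γ₂
    rw [hgbid w hwD, hwg]
    exact hy₀γ
  by_cases hUZ : (U ∩ Z).Nonempty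
  · -- the easy case: take S = gb '' U
    obtain ⟨z₁, hz₁U, hz₁Z⟩ := hUZ
    refine ⟨gb '' U, ?_, ?_, ?_, ?_, ?_⟩
    · rintro y ⟨x, -, rfl⟩
      exact hgbD2 x
    · exact hUconn.image gb hgbcont.continuousOn
    · apply eq_empty_iff_forall_notMem.mpr
      rintro y ⟨⟨x, hxU, rfl⟩, hyfr⟩
      exact hyfr.2 (hUW hxU)
    · refine ⟨gb p₀, ⟨p₀, mem_connectedComponentIn hp₀W, rfl⟩, ?_⟩
      rw [hgbid p₀ hp₀D2]
      exact hcirc p₀ hp₀norm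
    · exact ⟨gb z₁, ⟨z₁, hz₁U, rfl⟩, hz₁Z⟩
  · -- the contradiction case
    exfalso
    rw [not_nonempty_iff_eq_empty] at hUZ
    have hclU : closure U ∩ W ⊆ U := by
      rintro x ⟨hxc, hxW⟩
      have hop : IsOpen (connectedComponentIn W x) := hWopen.connectedComponentIn
      have hmemx : x ∈ connectedComponentIn W x := mem_connectedComponentIn hxW
      obtain ⟨y, hyC, hyU⟩ := mem_closure_iff.mp hxc _ hop hmemx
      have h1 : connectedComponentIn W x = connectedComponentIn W y := connectedComponentIn_eq hyC
      have h2 : connectedComponentIn W p₀ = connectedComponentIn W y := connectedComponentIn_eq hyU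
      have : x ∈ connectedComponentIn W y := h1 ▸ hmemx
      rw [hU]
      rw [h2]
      exact this
    set Ω : Set E2 := (closure U)ᶜ with hΩ
    have hΩopen : IsOpen Ω := isClosed_closure.isOpen_compl
    have hZΩ : Z ⊆ Ω := by
      intro x hx
      by_contra hc
      rw [hΩ, mem_compl_iff, not_not] at hc
      have hxU : x ∈ U := hclU ⟨hc, hZW hx⟩
      have : x ∈ U ∩ Z := ⟨hxU, hx⟩
      rw [hUZ] at this
      exact this
    have hΩball : Ω ⊆ ball (0:E2) 1 := by
      intro x hx
      by_contra hc
      have h1 : 1 ≤ ‖x‖ := by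
        rw [mem_ball_zero_iff, not_lt] at hc
        exact hc
      exact hx (subset_closure (houter h1))
    have hUint : U ⊆ interior (closure U) := interior_maximal subset_closure hUopen
    have hfrΩU : frontier Ω ⊆ closure U \ U := by
      intro x hx
      rw [hΩ, frontier_compl] at hx
      constructor
      · have h1 := hx.1
        rwa [closure_closure] at h1
      · intro hxU
        exact hx.2 (hUint hxU)
    have hfrΩW : ∀ x ∈ frontier Ω, x ∉ W := by
      intro x hx hxW
      obtain ⟨h1, h2⟩ := hfrΩU hx
      exact h2 (hclU ⟨h1, hxW⟩)
    have hout : ∀ x ∈ frontier Ω, 1 ≤ ‖k.symm (gb x)‖ :=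
      fun x hx => hnotint _ (hfrΩW x hx)
    -- log on the sphere for zeta ∘ h.symm ∘ k
    obtain ⟨M, hMc, hMe⟩ := sphereLog (G := fun y => zeta (h.symm (k y)))
      (zeta_cont.comp (h.symm.continuous.comp k.continuous)).continuousOn
      (by
        intro y hy
        apply hzne
        intro hyγ
        exact hnotint' y (le_of_eq (mem_sphere_zero_iff_norm.mp hy).symm) (hγ₂int hyγ))
    -- frontier Ω is compact
    have hfrsub : frontier Ω ⊆ closedBall (0:E2) 1 :=
      fun x hx => (closure_minimal (hΩball.trans ball_subset_closedBall) isClosed_closedBall) hx.1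
    have hfrcomp : IsCompact (frontier Ω) :=
      (isCompact_closedBall (0:E2) 1).of_isClosed_subset isClosed_frontier hfrsub
    -- the homotopy pushing gb out to the sphere (in k-coordinates)
    set cf : E2 → E3 := fun x => k.symm (gb x) with hcf
    have hcfcont : Continuous cf := k.symm.continuous.comp hgbcont
    set coeff : E2 × ℝ → ℝ := fun p => (1 - p.2) + p.2 * ‖cf p.1‖⁻¹ with hcoeff
    have hcfne : ∀ x ∈ frontier Ω, ‖cf x‖ ≠ 0 := by
      intro x hx
      have := hout x hx
      intro hh
      rw [hh] at this
      linarith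
    have hnorm1 : ∀ p : E2 × ℝ, p ∈ frontier Ω ×ˢ Icc (0:ℝ) 1 →
        1 ≤ ‖coeff p • cf p.1‖ := by
      rintro ⟨x, u⟩ ⟨hx, hu⟩
      have h1 : 1 ≤ ‖cf x‖ := hout x hx
      have hcoeffnn : 0 ≤ coeff (x, u) := by
        rw [hcoeff]
        simp only []
        have : (0:ℝ) ≤ u * ‖cf x‖⁻¹ := mul_nonneg hu.1 (inv_nonneg.mpr (by linarith))
        have h2 := hu.2
        nlinarith
      rw [norm_smul, Real.norm_eq_abs, _root_.abs_of_nonneg hcoeffnn]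
      rw [hcoeff]
      simp only []
      rw [add_mul, mul_assoc, inv_mul_cancel₀ (by linarith : ‖cf x‖ ≠ 0), mul_one]
      have h2 := hu.1
      have h3 := hu.2
      nlinarith
    set Hom : E2 × ℝ → ℂ := fun p => zeta (h.symm (k (coeff p • cf p.1))) with hHom
    have hcoeffcont : ContinuousOn coeff (frontier Ω ×ˢ Icc (0:ℝ) 1) := by
      apply ContinuousOn.add
      · exact (continuous_const.sub continuous_snd).continuousOn
      · apply ContinuousOn.mul continuous_snd.continuousOn
        apply ContinuousOn.inv₀
        · exact ((hcfcont.comp continuous_fst).norm).continuousOn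
        · rintro ⟨x, u⟩ ⟨hx, -⟩
          exact hcfne x hx
    have hHomcont : ContinuousOn Hom (frontier Ω ×ˢ Icc (0:ℝ) 1) := by
      apply (zeta_cont.comp (h.symm.continuous.comp k.continuous)).comp_continuousOn
      exact hcoeffcont.smul (hcfcont.comp continuous_fst).continuousOn
    have hHomne : ∀ p ∈ frontier Ω ×ˢ Icc (0:ℝ) 1, Hom p ≠ 0 := by
      intro p hp
      apply hzne
      intro hmem
      exact hnotint' _ (hnorm1 p hp) (hγ₂int hmem)
    -- the log at time 1 via the sphere log
    set L1 : E2 → ℂ := fun x => M (‖cf x‖⁻¹ • cf x) with hL1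
    have hsphmem : ∀ x ∈ frontier Ω, ‖cf x‖⁻¹ • cf x ∈ sphere (0:E3) 1 := by
      intro x hx
      apply mem_sphere_zero_iff_norm.mpr
      rw [norm_smul, norm_inv, Real.norm_eq_abs, abs_of_pos
        (lt_of_lt_of_le one_pos (hout x hx))]
      exact inv_mul_cancel₀ (hcfne x hx)
    have hL1c : ContinuousOn L1 (frontier Ω) := by
      apply hMc.comp _ hsphmem
      apply ContinuousOn.fun_smul _ hcfcont.continuousOn
      exact (hcfcont.norm.continuousOn).inv₀ hcfne
    have hL1e : ∀ x ∈ frontier Ω, Complex.exp (L1 x) = Hom (x, 1) := by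
      intro x hx
      rw [hL1]
      simp only []
      rw [hMe _ (hsphmem x hx)]
      rw [hHom]
      simp only []
      congr 2
      rw [hcoeff]
      norm_num
    obtain ⟨L0, hL0c, hL0e⟩ := telescope hfrcomp hHomcont hHomne hL1c hL1e
    have hL0F : ∀ x ∈ frontier Ω, Complex.exp (L0 x) = F x := by
      intro x hx
      rw [hL0e x hx, hHom]
      simp only []
      rw [show coeff (x, 0) = 1 by rw [hcoeff]; norm_num, one_smul, hcf]
      simp only []
      rw [k.apply_symm_apply]
    -- Tietze extension of L0 over the whole plane
    obtain ⟨Lt, hLt⟩ := ContinuousMap.exists_restrict_eq (X := E2) (Y := ℂ)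
      (s := frontier Ω) isClosed_frontier
      ⟨(frontier Ω).restrict L0, hL0c.restrict⟩
    have hLtval : ∀ x, x ∈ frontier Ω → Lt x = L0 x := by
      intro x hx
      exact DFunLike.congr_fun hLt (⟨x, hx⟩ : frontier Ω)
    -- the corrected function F1
    set F1 : E2 → ℂ := fun x => if x ∈ closure Ω then Complex.exp (Lt x) else F x with hF1
    have hclΩ : closure Ω = (interior (closure U))ᶜ := by
      rw [hΩ, closure_compl]
    have hfrcl : frontier (closure Ω) ⊆ frontier Ω := by
      intro x hx
      constructor
      · have h1 := hx.1
        rwa [closure_closure] at h1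
      · rw [hΩopen.interior_eq]
        intro hxΩ
        exact hx.2 ((interior_maximal subset_closure hΩopen) hxΩ)
    have hF1cont : Continuous F1 := by
      rw [← continuousOn_univ]
      apply ContinuousOn.if
      · intro a ha
        have hafr : a ∈ frontier Ω := hfrcl ha.2
        show Complex.exp (Lt a) = F a
        rw [hLtval a hafr, hL0F a hafr]
      · exact (Complex.continuous_exp.comp Lt.continuous).continuousOn
      · exact hFcont.continuousOn
    have hF1ne : ∀ x ∈ closedBall (0:E2) 1, F1 x ≠ 0 := by
      intro x _ h0'
      rw [hF1] at h0'
      simp only [] at h0'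
      by_cases hxc : x ∈ closure Ω
      · rw [if_pos hxc] at h0'
        exact Complex.exp_ne_zero _ h0'
      · rw [if_neg hxc] at h0'
        exact hxc (subset_closure (hZΩ (hFzero x h0')))
    have hF1bd : ∀ s : ℝ, F1 (WithLp.toLp 2 ![Real.cos s, Real.sin s])
        = Complex.exp (((Real.pi : ℂ) - (s : ℂ)) * Complex.I) := by
      intro s
      have hmemU : (WithLp.toLp 2 ![Real.cos s, Real.sin s] : E2) ∈ U := by
        apply houter
        show (1:ℝ) ≤ _
        rw [norm_e2 (WithLp.toLp 2 ![Real.cos s, Real.sin s] : E2)]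
        simp only [PiLp.toLp_apply, Matrix.cons_val_zero, Matrix.cons_val_one, Matrix.head_cons]
        rw [Real.cos_sq_add_sin_sq, Real.sqrt_one]
      have hnot : (WithLp.toLp 2 ![Real.cos s, Real.sin s] : E2) ∉ closure Ω := by
        rw [hclΩ]
        intro hcontra
        exact hcontra (hUint hmemU)
      rw [hF1]
      simp only []
      rw [if_neg hnot]
      exact hFbd s
    exact noWind hF1cont.continuousOn hF1ne hF1bd
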